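/- arXiv:2306.15557 — 4 statements merged into one kernel-verified Lean document; each statement's English description precedes it below -/
import Mathlib

section
/- Let d(x, X, f) = Σ_{x'∈X} (x' − x)·α(‖x' − x‖₂)·𝟙(f(x')=1) where α: ℝ≥0 → ℝ≥0 satisfies α(z) ≤ C/z for all z > 0. Then for any point of interest x ∈ ℝ^m, any model f : ℝ^m → {−1,+1}, any finite dataset X ⊆ ℝ^m, and any point x' ∉ X, we have ‖d(x, X ∪ {x'}, f) − d(x, X, f)‖₂ ≤ C. That is, the global ℓ₂-sensitivity of the StEP direction with respect to adding a datapoint is at most C. -/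
open Finset

open scoped Classical in
/-- Sensitivity of the StEP direction: adding one datapoint changes the
direction by at most `C` in Euclidean norm, provided `α z ≤ C / z`. -/
theorem step_sensitivity (m : ℕ) (C : ℝ) (hC : 0 ≤ C)
    (α : ℝ → ℝ) (hα_nonneg : ∀ z > 0, 0 ≤ α z)
    (hα : ∀ z > 0, α z ≤ C / z)
    (f : EuclideanSpace ℝ (Fin m) → ℤ)
    (X : Finset (EuclideanSpace ℝ (Fin m)))
    (x x' : EuclideanSpace ℝ (Fin m)) (hx' : x' ∉ X) :
    ‖(∑ z ∈ insert x' X, (if f z = 1 then α ‖z - x‖ • (z - x) else 0))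
      - ∑ z ∈ X, (if f z = 1 then α ‖z - x‖ • (z - x) else 0)‖ ≤ C := by
  rw [Finset.sum_insert hx', add_sub_cancel_right]
  split
  · rcases eq_or_ne (‖x' - x‖) 0 with h0 | h0
    · simp [h0, norm_eq_zero.mp h0, hC]
    · have hr : (0:ℝ) < ‖x' - x‖ := lt_of_le_of_ne (norm_nonneg _) (Ne.symm h0)
      rw [norm_smul, Real.norm_eq_abs, abs_of_nonneg (hα_nonneg _ hr)]
      calc α ‖x' - x‖ * ‖x' - x‖ ≤ (C / ‖x' - x‖) * ‖x' - x‖ :=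
            mul_le_mul_of_nonneg_right (hα _ hr) (norm_nonneg _)
        _ = C := div_mul_cancel₀ C h0
  · simpa using hC
end

section
/- Suppose d is a direction function satisfying: (RRF) for every orthogonal matrix A (det A ∈ {−1,+1}), A·d(x, X, f) = d(Ax, AX, f∘A⁻¹); and (PCM) for every point y ∉ X with f(y) = 1, for each coordinate i, if yᵢ > xᵢ then dᵢ(x, X ∪ {y}, f) ≥ dᵢ(x, X, f), and if yᵢ < xᵢ then dᵢ(x, X ∪ {y}, f) ≤ dᵢ(x, X, f). Then for every dataset X, point x, model f, and positively classified point y ≠ x with y ∉ X, there exists a ≥ 0 such that d(x, X ∪ {y}, f) − d(x, X, f) = a·(y − x). -/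
open Finset Matrix

noncomputable def givens {m : ℕ} (i j : Fin m) (c s : ℝ) : Matrix (Fin m) (Fin m) ℝ :=
  Matrix.of fun t k =>
    if t = i then (if k = i then c else if k = j then s else 0)
    else if t = j then (if k = i then -s else if k = j then c else 0)
    else if t = k then 1 else 0


lemma givens_mem {m : ℕ} {i j : Fin m} (hij : i ≠ j) {c s : ℝ} (h1 : c^2 + s^2 = 1) :
    givens i j c s ∈ Matrix.orthogonalGroup (Fin m) ℝ := by
  rw [Matrix.mem_orthogonalGroup_iff]
  ext k l
  rw [Matrix.mul_apply]
  simp only [Matrix.star_apply, star_trivial, givens, Matrix.of_apply]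
  by_cases hk : k = i
  · by_cases hl : l = i
    · rw [hk, hl]
      rw [show (Finset.univ.sum _ : ℝ) = _ from
          (Finset.sum_subset (Finset.subset_univ {i, j}) ?_).symm]
      · rw [Finset.sum_pair hij]
        simp [hij, hij.symm, Matrix.one_apply]
        linear_combination h1
      · intro t _ ht; simp at ht
        simp [ht.1, ht.2]
    · by_cases hl' : l = j
      · rw [hk, hl']
        rw [show (Finset.univ.sum _ : ℝ) = _ from
            (Finset.sum_subset (Finset.subset_univ {i, j}) ?_).symm]
        · rw [Finset.sum_pair hij]
          simp [hij, hij.symm, Matrix.one_apply]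
          ring
        · intro t _ ht; simp at ht
          simp [ht.1, ht.2]
      · rw [hk]
        rw [Finset.sum_eq_zero, Matrix.one_apply_ne (show i ≠ l from fun h => hl h.symm)]
        intro t _
        by_cases h1 : t = i <;> by_cases h2 : t = j <;>
          by_cases h4 : t = l <;> simp_all
  · by_cases hk' : k = j
    · by_cases hl : l = i
      · rw [hk', hl]
        rw [show (Finset.univ.sum _ : ℝ) = _ from
            (Finset.sum_subset (Finset.subset_univ {i, j}) ?_).symm]
        · rw [Finset.sum_pair hij]
          simp [hij, hij.symm, Matrix.one_apply]
          ring
        · intro t _ ht; simp at ht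
          simp [ht.1, ht.2]
      · by_cases hl' : l = j
        · rw [hk', hl']
          rw [show (Finset.univ.sum _ : ℝ) = _ from
              (Finset.sum_subset (Finset.subset_univ {i, j}) ?_).symm]
          · rw [Finset.sum_pair hij]
            simp [hij, hij.symm, Matrix.one_apply]
            linear_combination h1
          · intro t _ ht; simp at ht
            simp [ht.1, ht.2]
        · rw [hk']
          rw [Finset.sum_eq_zero, Matrix.one_apply_ne (show j ≠ l from fun h => hl' h.symm)]
          intro t _
          by_cases h1 : t = i <;> by_cases h2 : t = j <;>
            by_cases h4 : t = l <;> simp_all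
    · by_cases hl : l = i
      · rw [hl]
        rw [Finset.sum_eq_zero, Matrix.one_apply_ne (show k ≠ i from hk)]
        intro t _
        by_cases h1 : t = i <;> by_cases h2 : t = j <;>
          by_cases h3 : t = k <;> simp_all
      · by_cases hl' : l = j
        · rw [hl']
          rw [Finset.sum_eq_zero, Matrix.one_apply_ne (show k ≠ j from hk')]
          intro t _
          by_cases h1 : t = i <;> by_cases h2 : t = j <;>
            by_cases h3 : t = k <;> simp_all
        · simp only [hk, hk', hl, hl', if_false, Matrix.transpose_apply, Matrix.of_apply]
          rw [show (∑ t, (if k = t then (1:ℝ) else 0) * (if l = t then 1 else 0)) =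
              ∑ t, (if t = k then (if l = t then (1:ℝ) else 0) else 0) from
              Finset.sum_congr rfl (by
                intro t _
                by_cases h : t = k
                · simp [h]
                · simp [h, (Ne.symm h : k ≠ t)])]
          rw [Finset.sum_ite_eq']
          simp [Matrix.one_apply, eq_comm]

lemma givens_mulVec {m : ℕ} {i j : Fin m} (hij : i ≠ j) (c s : ℝ) (z : Fin m → ℝ) (k : Fin m) :
    (givens i j c s).mulVec z k =
      if k = i then c * z i + s * z j else if k = j then -s * z i + c * z j else z k := by
  rw [Matrix.mulVec, dotProduct]
  simp only [givens, Matrix.of_apply]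
  by_cases hk : k = i
  · rw [hk]
    rw [show (Finset.univ.sum _ : ℝ) = _ from
        (Finset.sum_subset (Finset.subset_univ {i, j}) ?_).symm]
    · rw [Finset.sum_pair hij]; simp [hij, hij.symm]
    · intro t _ ht; simp at ht; simp [ht.1, ht.2]
  · by_cases hk' : k = j
    · rw [hk']
      rw [show (Finset.univ.sum _ : ℝ) = _ from
          (Finset.sum_subset (Finset.subset_univ {i, j}) ?_).symm]
      · rw [Finset.sum_pair hij]; simp [hij, hij.symm]
      · intro t _ ht; simp at ht; simp [ht.1, ht.2]
    · simp only [hk, hk', if_false]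
      rw [show (Finset.univ.sum _ : ℝ) =
          ∑ t, (if k = t then z t else 0) from
          Finset.sum_congr rfl (by
            intro t _
            by_cases h1 : t = i <;> by_cases h2 : t = j <;> by_cases h3 : t = k <;>
              simp_all)]
      rw [Finset.sum_ite_eq]
      simp

lemma step_ray_nonneg_of (B C : ℝ) (h : ∀ t : ℝ, 0 < t → 0 ≤ B + t * C) : 0 ≤ B := by
  by_contra hB
  push_neg at hB
  rcases le_or_gt C 0 with hC | hC
  · have := h 1 one_pos; linarith
  · have ht : (0:ℝ) < -B / (2 * C) := div_pos (by linarith) (by linarith)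
    have h2 := h (-B / (2 * C)) ht
    have h3 : B + (-B / (2 * C)) * C = B / 2 := by field_simp; ring
    rw [h3] at h2; linarith


open scoped Classical in
/-- Lemma 3.1: RRF + PCM imply that adding a positively classified point moves
the direction along the ray towards that point. -/
theorem step_ray_lemma (m : ℕ)
    (d : EuclideanSpace ℝ (Fin m) → Finset (EuclideanSpace ℝ (Fin m)) →
          (EuclideanSpace ℝ (Fin m) → ℤ) → EuclideanSpace ℝ (Fin m))
    (hRRF : ∀ (A : Matrix (Fin m) (Fin m) ℝ), A ∈ Matrix.orthogonalGroup (Fin m) ℝ →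
      ∀ (x : EuclideanSpace ℝ (Fin m)) (X : Finset (EuclideanSpace ℝ (Fin m)))
        (f : EuclideanSpace ℝ (Fin m) → ℤ),
        (WithLp.toLp 2 (A.mulVec (d x X f)) : EuclideanSpace ℝ (Fin m)) =
          d (WithLp.toLp 2 (A.mulVec x)) (X.image (fun (z : EuclideanSpace ℝ (Fin m)) => (WithLp.toLp 2 (A.mulVec z) : EuclideanSpace ℝ (Fin m))))
            (fun z => f (WithLp.toLp 2 ((A⁻¹).mulVec z))))
    (hPCM : ∀ (x : EuclideanSpace ℝ (Fin m)) (X : Finset (EuclideanSpace ℝ (Fin m)))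
        (f : EuclideanSpace ℝ (Fin m) → ℤ) (y : EuclideanSpace ℝ (Fin m)),
        y ∉ X → f y = 1 → ∀ i : Fin m,
          (y i > x i → d x (insert y X) f i ≥ d x X f i) ∧
          (y i < x i → d x (insert y X) f i ≤ d x X f i)) :
    ∀ (x : EuclideanSpace ℝ (Fin m)) (X : Finset (EuclideanSpace ℝ (Fin m)))
      (f : EuclideanSpace ℝ (Fin m) → ℤ) (y : EuclideanSpace ℝ (Fin m)),
      y ∉ X → y ≠ x → f y = 1 →
      ∃ a : ℝ, 0 ≤ a ∧ d x (insert y X) f - d x X f = a • (y - x) := by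
  classical
  intro x X f y hyX hyx hfy
  set d1 := d x X f with hd1
  set d2 := d x (insert y X) f with hd2
  -- Key rotated inequality
  have key : ∀ (i j : Fin m), i ≠ j → ∀ c s : ℝ, c^2 + s^2 = 1 →
      0 < c * (y i - x i) + s * (y j - x j) →
      0 ≤ c * (d2 i - d1 i) + s * (d2 j - d1 j) := by
    intro i j hij c s hcs hpos
    set A := givens i j c s with hA
    have hAmem := givens_mem hij hcs
    have hdet : IsUnit A.det :=
      Matrix.isUnit_det_of_right_inverse ((Matrix.mem_orthogonalGroup_iff _ _).1 hAmem)
    have hAinv : ∀ z : EuclideanSpace ℝ (Fin m), ((A⁻¹).mulVec (A.mulVec z) : Fin m → ℝ) = z := by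
      intro z
      rw [Matrix.mulVec_mulVec, Matrix.nonsing_inv_mul A hdet, Matrix.one_mulVec]
    have hinj : ∀ a b : EuclideanSpace ℝ (Fin m),
        (WithLp.toLp 2 (A.mulVec a) : EuclideanSpace ℝ (Fin m)) = WithLp.toLp 2 (A.mulVec b) → a = b := by
      intro a b h
      have := congrArg (fun w : EuclideanSpace ℝ (Fin m) => ((A⁻¹).mulVec w : Fin m → ℝ)) h
      exact PiLp.ext (fun k => by simpa [hAinv] using congrFun this k)
    have h1 := hRRF A hAmem x X f
    have h2 := hRRF A hAmem x (insert y X) f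
    obtain ⟨S1, hS1, hS1mem⟩ : ∃ S : Finset (EuclideanSpace ℝ (Fin m)),
        (WithLp.toLp 2 (A.mulVec (d x X f)) : EuclideanSpace ℝ (Fin m))
          = d (WithLp.toLp 2 (A.mulVec x)) S (fun z => f (WithLp.toLp 2 ((A⁻¹).mulVec z)))
        ∧ ∀ w : EuclideanSpace ℝ (Fin m), w ∈ S ↔
            ∃ z ∈ X, (WithLp.toLp 2 (A.mulVec z) : EuclideanSpace ℝ (Fin m)) = w :=
      ⟨_, h1, fun w => Finset.mem_image⟩
    obtain ⟨S2, hS2, hS2mem⟩ : ∃ S : Finset (EuclideanSpace ℝ (Fin m)),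
        (WithLp.toLp 2 (A.mulVec (d x (insert y X) f)) : EuclideanSpace ℝ (Fin m))
          = d (WithLp.toLp 2 (A.mulVec x)) S (fun z => f (WithLp.toLp 2 ((A⁻¹).mulVec z)))
        ∧ ∀ w : EuclideanSpace ℝ (Fin m), w ∈ S ↔
            ∃ z ∈ insert y X, (WithLp.toLp 2 (A.mulVec z) : EuclideanSpace ℝ (Fin m)) = w :=
      ⟨_, h2, fun w => Finset.mem_image⟩
    have hmem : (WithLp.toLp 2 (A.mulVec y) : EuclideanSpace ℝ (Fin m)) ∉ S1 := by
      rw [hS1mem]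
      rintro ⟨z, hz, hzz⟩
      exact hyX (hinj z y hzz ▸ hz)
    have hgy : f (WithLp.toLp 2 ((A⁻¹).mulVec (WithLp.toLp 2 (A.mulVec y) : EuclideanSpace ℝ (Fin m)))) = 1 := by
      rw [show ((A⁻¹).mulVec (A.mulVec y) : Fin m → ℝ) = y from hAinv y]
      exact hfy
    have hgt : (WithLp.toLp 2 (A.mulVec y) : EuclideanSpace ℝ (Fin m)) i > (WithLp.toLp 2 (A.mulVec x) : EuclideanSpace ℝ (Fin m)) i := by
      have ey := givens_mulVec hij c s y i
      have ex := givens_mulVec hij c s x i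
      simp only [if_pos rfl, if_true, eq_self_iff_true] at ey ex
      show (A.mulVec y : Fin m → ℝ) i > (A.mulVec x : Fin m → ℝ) i
      rw [ey, ex]; linarith
    have hP := (hPCM (WithLp.toLp 2 (A.mulVec x)) S1 (fun z => f (WithLp.toLp 2 ((A⁻¹).mulVec z))) (WithLp.toLp 2 (A.mulVec y)) hmem hgy i).1 hgt
    obtain ⟨T, hTmem, hP⟩ : ∃ T : Finset (EuclideanSpace ℝ (Fin m)),
        (∀ w : EuclideanSpace ℝ (Fin m), w ∈ T ↔ w = WithLp.toLp 2 (A.mulVec y) ∨ w ∈ S1)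
        ∧ d (WithLp.toLp 2 (A.mulVec x)) T (fun z => f (WithLp.toLp 2 ((A⁻¹).mulVec z))) i
            ≥ d (WithLp.toLp 2 (A.mulVec x)) S1 (fun z => f (WithLp.toLp 2 ((A⁻¹).mulVec z))) i :=
      ⟨_, fun w => Finset.mem_insert, hP⟩
    have hTS2 : T = S2 := by
      apply Finset.ext
      intro w
      rw [hTmem w, hS2mem w]
      constructor
      · rintro (rfl | hw)
        · exact ⟨y, Finset.mem_insert_self _ _, rfl⟩
        · obtain ⟨z, hz, hzz⟩ := (hS1mem w).1 hw
          exact ⟨z, Finset.mem_insert_of_mem hz, hzz⟩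
      · rintro ⟨z, hz, rfl⟩
        rcases Finset.mem_insert.1 hz with rfl | hz
        · exact Or.inl rfl
        · exact Or.inr ((hS1mem _).2 ⟨z, hz, rfl⟩)
    rw [hTS2] at hP
    have c1 : (A.mulVec d1 : Fin m → ℝ) i
        = d (WithLp.toLp 2 (A.mulVec x)) S1 (fun z => f (WithLp.toLp 2 ((A⁻¹).mulVec z))) i :=
      congrArg (fun w : EuclideanSpace ℝ (Fin m) => w i) hS1
    have c2 : (A.mulVec d2 : Fin m → ℝ) i
        = d (WithLp.toLp 2 (A.mulVec x)) S2 (fun z => f (WithLp.toLp 2 ((A⁻¹).mulVec z))) i :=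
      congrArg (fun w : EuclideanSpace ℝ (Fin m) => w i) hS2
    have e1 := givens_mulVec hij c s d1 i
    have e2 := givens_mulVec hij c s d2 i
    simp only [if_pos rfl, if_true, eq_self_iff_true] at e1 e2
    rw [← c1, ← c2, e1, e2] at hP
    linarith
  -- cross-difference identity (one-sided)
  have cross : ∀ i j : Fin m, i ≠ j →
      0 ≤ (y i - x i) * (d2 j - d1 j) - (y j - x j) * (d2 i - d1 i) := by
    intro i j hij
    set vi := y i - x i with hvi
    set vj := y j - x j with hvj
    set Di := d2 i - d1 i with hDi
    set Dj := d2 j - d1 j with hDj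
    by_cases hz : vi = 0 ∧ vj = 0
    · rw [hz.1, hz.2]; ring_nf; exact le_refl 0
    · have hr2 : 0 < vi^2 + vj^2 := by
        rcases not_and_or.1 hz with h | h
        · have := pow_two_pos_of_ne_zero h -- could be pow_two_pos_of_ne_zero vi h in old
          nlinarith [sq_nonneg vj]
        · have := pow_two_pos_of_ne_zero h
          nlinarith [sq_nonneg vi]
      apply step_ray_nonneg_of _ (vi * Di + vj * Dj)
      intro t ht
      have hNpos : 0 < Real.sqrt ((1 + t^2) * (vi^2 + vj^2)) := by
        apply Real.sqrt_pos.2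
        have h1t : (0:ℝ) < 1 + t^2 := by positivity
        exact mul_pos h1t hr2
      set N := Real.sqrt ((1 + t^2) * (vi^2 + vj^2)) with hN
      have hN2 : N^2 = (1 + t^2) * (vi^2 + vj^2) := Real.sq_sqrt (by positivity)
      have hNne : N ≠ 0 := ne_of_gt hNpos
      have hcs : ((-vj + t * vi)/N)^2 + ((vi + t * vj)/N)^2 = 1 := by
        field_simp
        rw [hN2]; ring
      have hpos : 0 < ((-vj + t * vi)/N) * vi + ((vi + t * vj)/N) * vj := by
        have heq : ((-vj + t * vi)/N) * vi + ((vi + t * vj)/N) * vj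
            = t * (vi^2 + vj^2) / N := by field_simp; ring
        rw [heq]
        positivity
      have hk := key i j hij _ _ hcs hpos
      have hmul : 0 ≤ N * (((-vj + t * vi)/N) * Di + ((vi + t * vj)/N) * Dj) :=
        mul_nonneg (le_of_lt hNpos) hk
      have hexp : N * (((-vj + t * vi)/N) * Di + ((vi + t * vj)/N) * Dj)
          = (vi * Dj - vj * Di) + t * (vi * Di + vj * Dj) := by
        field_simp; ring
      linarith [hexp ▸ hmul]
  -- direct sign info
  have sign := hPCM x X f y hyX hfy
  -- pick a coordinate where y ≠ x
  have hex : ∃ k : Fin m, y k ≠ x k := by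
    by_contra h
    push_neg at h
    exact hyx (PiLp.ext h)
  obtain ⟨k, hk⟩ := hex
  have hvk : y k - x k ≠ 0 := sub_ne_zero.2 hk
  refine ⟨(d2 k - d1 k) / (y k - x k), ?_, ?_⟩
  · rcases lt_or_gt_of_ne hk with hlt | hgt
    · -- y k < x k
      have hD : d2 k - d1 k ≤ 0 := by have := (sign k).2 hlt; linarith
      have hv : y k - x k < 0 := by linarith
      rw [← neg_div_neg_eq]
      exact div_nonneg (by linarith) (by linarith)
    · have hD : 0 ≤ d2 k - d1 k := by have := (sign k).1 hgt; linarith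
      have hv : 0 < y k - x k := by linarith
      exact div_nonneg hD (le_of_lt hv)
  · ext t
    show d2 t - d1 t = (d2 k - d1 k) / (y k - x k) * (y t - x t)
    by_cases htk : t = k
    · rw [htk, div_mul_cancel₀ _ hvk]
    · have hc1 := cross t k htk
      have hc2 := cross k t (Ne.symm htk)
      have heq : (y k - x k) * (d2 t - d1 t) = (y t - x t) * (d2 k - d1 k) := by linarith
      rw [div_mul_eq_mul_div, eq_div_iff hvk]
      linarith
end

section
/- Single-point case of the StEP uniqueness theorem: suppose a direction function d satisfies Shift Invariance, Rotation/Reflection Faithfulness, Data Manifold Symmetry, and the ray property of Lemma 3.1 (for any positively classified y ∉ X with y ≠ x, d(x, X ∪ {y}, f) − d(x, X, f) = a(y − x) for some a ≥ 0), and d(x, ∅, f) = 0. Then there exists a nonnegative function α : ℝ>0 → ℝ≥0 such that for every x, every y ≠ x with f(y) = 1, d(x, {y}, f) = α(‖y − x‖₂)·(y − x). -/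
open Finset Matrix

theorem exists_orth_matrix (m : ℕ)
    (e : EuclideanSpace ℝ (Fin m) ≃ₗᵢ[ℝ] EuclideanSpace ℝ (Fin m)) :
    ∃ A : Matrix (Fin m) (Fin m) ℝ, A ∈ Matrix.orthogonalGroup (Fin m) ℝ ∧
      ∀ v : EuclideanSpace ℝ (Fin m), (WithLp.toLp 2 (A.mulVec v) : EuclideanSpace ℝ (Fin m)) = e v := by
  set A : Matrix (Fin m) (Fin m) ℝ :=
    Matrix.toEuclideanLin.symm (e.toLinearEquiv : EuclideanSpace ℝ (Fin m) →ₗ[ℝ] EuclideanSpace ℝ (Fin m)) with hAdef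
  have hA : Matrix.toEuclideanLin A = (e.toLinearEquiv : EuclideanSpace ℝ (Fin m) →ₗ[ℝ] EuclideanSpace ℝ (Fin m)) := by
    simp [hAdef]
  have hmul : ∀ v : EuclideanSpace ℝ (Fin m), (WithLp.toLp 2 (A.mulVec v) : EuclideanSpace ℝ (Fin m)) = e v := by
    intro v
    have : Matrix.toEuclideanLin A v = e v := by rw [hA]; rfl
    exact this
  refine ⟨A, ?_, hmul⟩
  rw [Matrix.mem_orthogonalGroup_iff']
  have key : Matrix.toEuclideanLin (star A * A) = Matrix.toEuclideanLin 1 := by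
    rw [Matrix.toEuclideanLin_eq_toLin, Matrix.toLin_mul _ (PiLp.basisFun 2 ℝ (Fin m)) _,
      Matrix.toLin_one, ← Matrix.toEuclideanLin_eq_toLin,
      Matrix.star_eq_conjTranspose, Matrix.toEuclideanLin_conjTranspose_eq_adjoint, hA]
    apply LinearMap.ext
    intro u
    apply ext_inner_right ℝ
    intro v
    rw [LinearMap.comp_apply, LinearMap.adjoint_inner_left]
    simp [e.inner_map_map u v]
  exact Matrix.toEuclideanLin.injective key


open scoped Classical in
/-- Single-point case of the StEP uniqueness theorem: the direction toward a
single positively classified point is a nonnegative multiple of `y - x`,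
with coefficient depending only on the distance `‖y - x‖`. -/
theorem step_singleton (m : ℕ) (hm : 2 ≤ m)
    (d : EuclideanSpace ℝ (Fin m) → Finset (EuclideanSpace ℝ (Fin m)) →
          (EuclideanSpace ℝ (Fin m) → ℤ) → EuclideanSpace ℝ (Fin m))
    (hSI : ∀ (x : EuclideanSpace ℝ (Fin m)) (X : Finset (EuclideanSpace ℝ (Fin m)))
      (f : EuclideanSpace ℝ (Fin m) → ℤ) (b : EuclideanSpace ℝ (Fin m)),
      d x X f = d (x + b) (X.image (fun z => z + b)) (fun z => f (z - b)))
    (hRRF : ∀ (A : Matrix (Fin m) (Fin m) ℝ), A ∈ Matrix.orthogonalGroup (Fin m) ℝ →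
      ∀ (x : EuclideanSpace ℝ (Fin m)) (X : Finset (EuclideanSpace ℝ (Fin m)))
        (f : EuclideanSpace ℝ (Fin m) → ℤ),
        (WithLp.toLp 2 (A.mulVec (d x X f)) : EuclideanSpace ℝ (Fin m)) =
          d (WithLp.toLp 2 (A.mulVec x)) (X.image (fun (z : EuclideanSpace ℝ (Fin m)) => (WithLp.toLp 2 (A.mulVec z) : EuclideanSpace ℝ (Fin m))))
            (fun z => f (WithLp.toLp 2 ((A⁻¹).mulVec z))))
    (hDMS : ∀ (x : EuclideanSpace ℝ (Fin m)) (X : Finset (EuclideanSpace ℝ (Fin m)))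
      (f g : EuclideanSpace ℝ (Fin m) → ℤ),
      (∀ z ∈ X, f z = g z) → d x X f = d x X g)
    (hRay : ∀ (x : EuclideanSpace ℝ (Fin m)) (X : Finset (EuclideanSpace ℝ (Fin m)))
      (f : EuclideanSpace ℝ (Fin m) → ℤ) (y : EuclideanSpace ℝ (Fin m)),
      y ∉ X → y ≠ x → f y = 1 →
      ∃ a : ℝ, 0 ≤ a ∧ d x (insert y X) f - d x X f = a • (y - x))
    (hEmpty : ∀ (x : EuclideanSpace ℝ (Fin m)) (f : EuclideanSpace ℝ (Fin m) → ℤ),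
      d x ∅ f = 0) :
    ∃ α : ℝ → ℝ, (∀ z > (0 : ℝ), 0 ≤ α z) ∧
      ∀ (x y : EuclideanSpace ℝ (Fin m)) (f : EuclideanSpace ℝ (Fin m) → ℤ),
        y ≠ x → f y = 1 → d x {y} f = α ‖y - x‖ • (y - x) := by
  -- the canonical direction function at the origin with constant classifier 1
  set D : EuclideanSpace ℝ (Fin m) → EuclideanSpace ℝ (Fin m) :=
    fun y => d 0 {y} (fun _ => 1) with hDdef
  -- reduction to D
  have hD : ∀ (x y : EuclideanSpace ℝ (Fin m)) (f : EuclideanSpace ℝ (Fin m) → ℤ),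
      f y = 1 → d x {y} f = D (y - x) := by
    intro x y f hf
    rw [hSI x {y} f (-x)]
    have h1 : x + -x = (0 : EuclideanSpace ℝ (Fin m)) := by abel
    have h2 : ({y} : Finset (EuclideanSpace ℝ (Fin m))).image (fun z => z + -x) = {y - x} := by
      simp [Finset.image_singleton, sub_eq_add_neg]
    rw [h1, h2, hDdef]
    apply hDMS
    intro z hz
    rw [Finset.mem_singleton] at hz
    subst hz
    have : y - x - -x = y := by abel
    rw [this, hf]
  -- ray property for D
  have hray : ∀ y : EuclideanSpace ℝ (Fin m), y ≠ 0 →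
      ∃ a : ℝ, 0 ≤ a ∧ D y = a • y := by
    intro y hy
    obtain ⟨a, ha, hae⟩ := hRay 0 ∅ (fun _ => 1) y (Finset.notMem_empty y) hy rfl
    refine ⟨a, ha, ?_⟩
    rw [hDdef]
    simpa [hEmpty] using hae
  -- rotation invariance for D
  have hrot : ∀ (A : Matrix (Fin m) (Fin m) ℝ), A ∈ Matrix.orthogonalGroup (Fin m) ℝ →
      ∀ y : EuclideanSpace ℝ (Fin m),
      (WithLp.toLp 2 (A.mulVec (D y)) : EuclideanSpace ℝ (Fin m)) = D (WithLp.toLp 2 (A.mulVec y)) := by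
    intro A hAmem y
    have := hRRF A hAmem 0 {y} (fun _ => 1)
    rw [hDdef]
    simp only [Finset.image_singleton] at this ⊢
    have h0 : (WithLp.toLp 2 (A.mulVec (0 : EuclideanSpace ℝ (Fin m))) : EuclideanSpace ℝ (Fin m)) = 0 := by
      simp
    rw [h0] at this
    exact this
  -- D y depends only on ‖y‖ up to direction: transfer coefficient
  have htrans : ∀ (y y' : EuclideanSpace ℝ (Fin m)) (a : ℝ), y ≠ 0 → y' ≠ 0 →
      ‖y‖ = ‖y'‖ → D y = a • y → D y' = a • y' := by
    intro y y' a hy hy' hnorm hDy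
    have key : ∃ e : EuclideanSpace ℝ (Fin m) ≃ₗᵢ[ℝ] EuclideanSpace ℝ (Fin m), e y = y' :=
      ⟨Submodule.reflection (ℝ ∙ (y - y'))ᗮ, Submodule.reflection_sub hnorm⟩
    obtain ⟨e, hey⟩ := key
    obtain ⟨A, hAmem, hAe⟩ := exists_orth_matrix m e
    have hyy' : (WithLp.toLp 2 (A.mulVec y) : EuclideanSpace ℝ (Fin m)) = y' := by
      rw [hAe, hey]
    calc D y' = D (WithLp.toLp 2 (A.mulVec y)) := by rw [hyy']
    _ = WithLp.toLp 2 (A.mulVec (D y)) := (hrot A hAmem y).symm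
    _ = WithLp.toLp 2 (A.mulVec (a • y)) := by rw [hDy]; simp
    _ = a • (WithLp.toLp 2 (A.mulVec y) : EuclideanSpace ℝ (Fin m)) := by simp [Matrix.mulVec_smul]
    _ = a • y' := by rw [hyy']
  -- canonical point of norm r
  have hm0 : 0 < m := by omega
  set pt : ℝ → EuclideanSpace ℝ (Fin m) :=
    fun r => r • EuclideanSpace.single (⟨0, hm0⟩ : Fin m) (1 : ℝ) with hptdef
  have hptnorm : ∀ r : ℝ, 0 < r → ‖pt r‖ = r := by
    intro r hr
    rw [hptdef]
    simp [norm_smul, abs_of_pos hr]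
  have hptne : ∀ r : ℝ, 0 < r → pt r ≠ 0 := by
    intro r hr h
    have := hptnorm r hr
    rw [h, norm_zero] at this
    exact absurd this.symm (ne_of_gt hr)
  refine ⟨fun r => if hr : 0 < r then Classical.choose (hray (pt r) (hptne r hr)) else 0,
    ?_, ?_⟩
  · intro z hz
    simp only [hz, dif_pos]
    exact (Classical.choose_spec (hray (pt z) (hptne z hz))).1
  · intro x y f hyx hf
    have hr : 0 < ‖y - x‖ := by
      rw [norm_pos_iff]
      exact sub_ne_zero_of_ne hyx
    simp only [hr, dif_pos]
    set a := Classical.choose (hray (pt ‖y - x‖) (hptne _ hr)) with hadef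
    have haspec := (Classical.choose_spec (hray (pt ‖y - x‖) (hptne _ hr))).2
    rw [hD x y f hf]
    exact htrans _ _ a (hptne _ hr) (sub_ne_zero_of_ne hyx) (hptnorm _ hr) haspec
end

section
/- Inductive step of the StEP uniqueness proof: let d be a direction function, x ∈ ℝ^m, f a classifier, and Y a finite dataset containing two distinct positively classified points y, z ≠ x such that y − x and z − x are linearly independent. Suppose (i) d(x, Y, f) ∈ {d(x, Y∖{y}, f) + a(y−x) : a ≥ 0} and d(x, Y, f) ∈ {d(x, Y∖{z}, f) + a(z−x) : a ≥ 0}, and (ii) d(x, Y∖{y}, f) = d(x, Y∖{y,z}, f) + α(‖z−x‖)(z−x) and d(x, Y∖{z}, f) = d(x, Y∖{y,z}, f) + α(‖y−x‖)(y−x) for some function α ≥ 0. Then d(x, Y, f) = d(x, Y∖{y,z}, f) + α(‖y−x‖)(y−x) + α(‖z−x‖)(z−x). -/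
open Finset

open scoped Classical in
/-- Inductive step of the StEP uniqueness proof. -/
theorem step_inductive_step (m : ℕ)
    (d : EuclideanSpace ℝ (Fin m) → Finset (EuclideanSpace ℝ (Fin m)) →
          (EuclideanSpace ℝ (Fin m) → ℤ) → EuclideanSpace ℝ (Fin m))
    (α : ℝ → ℝ) (hα : ∀ t, 0 ≤ α t)
    (x : EuclideanSpace ℝ (Fin m)) (f : EuclideanSpace ℝ (Fin m) → ℤ)
    (Y : Finset (EuclideanSpace ℝ (Fin m))) (y z : EuclideanSpace ℝ (Fin m))
    (hyY : y ∈ Y) (hzY : z ∈ Y) (hyz : y ≠ z)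
    (hfy : f y = 1) (hfz : f z = 1)
    (hindep : LinearIndependent ℝ ![y - x, z - x])
    (hray_y : ∃ a : ℝ, 0 ≤ a ∧ d x Y f = d x (Y.erase y) f + a • (y - x))
    (hray_z : ∃ b : ℝ, 0 ≤ b ∧ d x Y f = d x (Y.erase z) f + b • (z - x))
    (hih_y : d x (Y.erase y) f =
      d x ((Y.erase y).erase z) f + α ‖z - x‖ • (z - x))
    (hih_z : d x (Y.erase z) f =
      d x ((Y.erase z).erase y) f + α ‖y - x‖ • (y - x)) :
    d x Y f = d x ((Y.erase y).erase z) f +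
      α ‖y - x‖ • (y - x) + α ‖z - x‖ • (z - x) := by
  obtain ⟨a, ha, hay⟩ := hray_y
  obtain ⟨b, hb, hbz⟩ := hray_z
  have hcomm : (Y.erase z).erase y = (Y.erase y).erase z := Finset.erase_right_comm
  rw [hcomm] at hih_z
  set w := d x ((Y.erase y).erase z) f
  have h1 : d x Y f = w + α ‖z - x‖ • (z - x) + a • (y - x) := by rw [hay, hih_y]
  have h2 : d x Y f = w + α ‖y - x‖ • (y - x) + b • (z - x) := by rw [hbz, hih_z]
  have heq : (a - α ‖y - x‖) • (y - x) + (α ‖z - x‖ - b) • (z - x) = 0 := by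
    have h3 := h1.symm.trans h2
    linear_combination (norm := module) h3
  obtain ⟨e1, e2⟩ := (LinearIndependent.pair_iff.mp hindep) _ _ heq
  have ha' : a = α ‖y - x‖ := by linarith
  rw [hay, hih_y, ha']
  abel
end
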